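/- Fix α, β ∈ [0,1] and define γ₁ = 1 − √(β(1−α)) − √(α(1−β)), γ₂ = 1 − √(β(1−α)) + √(α(1−β)), γ₃ = 1 + √(β(1−α)) − √(α(1−β)), γ₄ = 1 + √(β(1−α)) + √(α(1−β)). Then the integral of g(t) = √(−(t−γ₁)(t−γ₂)(t−γ₃)(t−γ₄)) / (π t (2−t) |t−1|) over [γ₁, min(γ₂,γ₃)] ∪ [max(γ₂,γ₃), γ₄] equals 2·min(α, β, 1−α, 1−β). -/

import Mathlib

open Real

noncomputable def γ₁ (α β : ℝ) : ℝ := 1 - Real.sqrt (β * (1 - α)) - Real.sqrt (α * (1 - β))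
noncomputable def γ₂ (α β : ℝ) : ℝ := 1 - Real.sqrt (β * (1 - α)) + Real.sqrt (α * (1 - β))
noncomputable def γ₃ (α β : ℝ) : ℝ := 1 + Real.sqrt (β * (1 - α)) - Real.sqrt (α * (1 - β))
noncomputable def γ₄ (α β : ℝ) : ℝ := 1 + Real.sqrt (β * (1 - α)) + Real.sqrt (α * (1 - β))

/-- The density of the absolutely continuous part of `B(α) ⊞ B(β)`. -/
noncomputable def bernoulliBoxplusDensity (α β : ℝ) (t : ℝ) : ℝ :=
  Real.sqrt (-((t - γ₁ α β) * (t - γ₂ α β) * (t - γ₃ α β) * (t - γ₄ α β))) /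
    (π * t * (2 - t) * |t - 1|)

open MeasureTheory Set intervalIntegral

lemma sqrtIntAux1 {A B : ℝ} (hB : 0 ≤ B) (hBA : B ≤ A) :
    IntervalIntegrable (fun s => Real.sqrt ((A - s) * (s - B)) / s) volume B A := by
  apply IntervalIntegrable.mono_fun' (g := fun s => Real.sqrt A * s ^ (-(1/2) : ℝ))
    ((intervalIntegrable_rpow' (by norm_num)).const_mul _)
  · exact ((Real.continuous_sqrt.comp (by continuity)).measurable.div
      measurable_id).aestronglyMeasurable
  · rw [uIoc_of_le hBA]
    filter_upwards [ae_restrict_mem measurableSet_Ioc] with s hs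
    have hs0 : 0 < s := lt_of_le_of_lt hB hs.1
    have hA0 : 0 ≤ A := le_trans hB hBA
    rw [Real.norm_eq_abs, abs_of_nonneg (by positivity)]
    have h1 : Real.sqrt ((A - s) * (s - B)) ≤ Real.sqrt (A * s) :=
      Real.sqrt_le_sqrt (mul_le_mul (by linarith) (by linarith [hs.1]) (by linarith [hs.1]) hA0)
    calc Real.sqrt ((A - s) * (s - B)) / s ≤ Real.sqrt (A * s) / s := by gcongr
      _ = Real.sqrt A * s ^ (-(1/2) : ℝ) := by
          rw [Real.sqrt_mul hA0, mul_div_assoc, Real.sqrt_div_self',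
            Real.rpow_neg hs0.le, ← Real.sqrt_eq_rpow, one_div]

lemma sqrtIntAux2 {A B : ℝ} (hB : 0 ≤ B) (hBA : B ≤ A) (hA1 : A ≤ 1) :
    IntervalIntegrable (fun s => Real.sqrt ((A - s) * (s - B)) / (1 - s)) volume B A := by
  have hb : IntervalIntegrable (fun s : ℝ => (1 - s) ^ (-(1/2) : ℝ)) volume B A := by
    have := (intervalIntegrable_rpow' (a := 1 - B) (b := 1 - A)
      (by norm_num : (-1:ℝ) < -(1/2))).comp_sub_left 1
    simpa using this
  apply IntervalIntegrable.mono_fun' hb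
  · exact ((Real.continuous_sqrt.comp (by continuity)).measurable.div
      ((measurable_const.sub measurable_id))).aestronglyMeasurable
  · rw [uIoc_of_le hBA]
    filter_upwards [ae_restrict_mem measurableSet_Ioc] with s hs
    have hs0 : 0 < s := lt_of_le_of_lt hB hs.1
    have hs1 : s ≤ 1 := le_trans hs.2 hA1
    rw [Real.norm_eq_abs, abs_of_nonneg (div_nonneg (Real.sqrt_nonneg _) (by linarith))]
    rcases hs1.lt_or_eq with h | h
    · have h1 : Real.sqrt ((A - s) * (s - B)) ≤ Real.sqrt (1 - s) := by
        have : (A - s) * (s - B) ≤ (1 - s) * 1 :=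
          mul_le_mul (by linarith) (by linarith [hs.1]) (by linarith [hs.1]) (by linarith)
        simpa using Real.sqrt_le_sqrt this
      calc Real.sqrt ((A - s) * (s - B)) / (1 - s) ≤ Real.sqrt (1 - s) / (1 - s) := by
            gcongr
        _ = (1 - s) ^ (-(1/2) : ℝ) := by
            rw [Real.sqrt_div_self', Real.rpow_neg (by linarith), ← Real.sqrt_eq_rpow, one_div]
    · rw [h]
      norm_num [Real.zero_rpow]

private lemma derivAlg1 (A B x r q : ℝ) (hABpos : 0 < A - B) (hx0 : 0 < x)
    (hr0 : 0 < r) (hq0 : 0 < q)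
    (hr2 : r ^ 2 = (A - x) * (x - B)) (hq2 : q ^ 2 = A * B) :
    r / x = (A + B - 2 * x) / (2 * r)
      + (A + B) / 2 * (1 / (2 / (A - B) * r) * (2 / (A - B)))
      - q * (1 / (2 / ((A - B) * x) * (q * r))
        * (((A + B) * 1 * ((A - B) * x) - ((A + B) * x - 2 * (A * B)) * ((A - B) * 1))
          / ((A - B) * x) ^ 2)) := by
  have hrne := hr0.ne'
  have hqne := hq0.ne'
  have hxne := hx0.ne'
  have hABne := hABpos.ne'
  have t3 : q * (1 / (2 / ((A - B) * x) * (q * r))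
        * (((A + B) * 1 * ((A - B) * x) - ((A + B) * x - 2 * (A * B)) * ((A - B) * 1))
          / ((A - B) * x) ^ 2)) = A * B / (x * r) := by
    rw [show ((A + B) * 1 * ((A - B) * x) - ((A + B) * x - 2 * (A * B)) * ((A - B) * 1))
        = 2 * (A * B) * (A - B) by ring]
    field_simp
  rw [t3]
  field_simp
  linear_combination 2 * hr2

private lemma derivAlg2 (A x r : ℝ) (hA0 : 0 < A) (hx0 : 0 < x) (hr0 : 0 < r)
    (hr2 : r ^ 2 = (A - x) * x) :
    r / x = (A - 2 * x) / (2 * r) + A / 2 * (1 / (2 / A * r) * (2 / A)) := by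
  have t2 : A / 2 * (1 / (2 / A * r) * (2 / A)) = A / (2 * r) := by
    field_simp
  rw [t2]
  field_simp
  linear_combination 2 * hr2

lemma intJ {A B : ℝ} (hB : 0 ≤ B) (hBA : B < A) :
    ∫ s in B..A, Real.sqrt ((A - s) * (s - B)) / s
      = π * ((A + B) / 2 - Real.sqrt (A * B)) := by
  rcases hB.lt_or_eq with hB0 | hB0
  · -- 0 < B
    have hABpos : 0 < A - B := by linarith
    have hA0 : 0 < A := by linarith
    have hq0 : 0 < Real.sqrt (A * B) := Real.sqrt_pos.mpr (by positivity)
    set F : ℝ → ℝ := fun s => Real.sqrt ((A - s) * (s - B))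
      + (A + B) / 2 * Real.arcsin ((2 * s - (A + B)) / (A - B))
      - Real.sqrt (A * B) * Real.arcsin (((A + B) * s - 2 * (A * B)) / ((A - B) * s)) with hF
    have hcont : ContinuousOn F (Icc B A) := by
      apply ContinuousOn.sub
      · apply ContinuousOn.add
        · exact (Real.continuous_sqrt.comp (by continuity)).continuousOn
        · exact continuousOn_const.mul (Real.continuous_arcsin.comp_continuousOn
            (((continuous_const.mul continuous_id').sub continuous_const).div_const _).continuousOn)
      · apply continuousOn_const.mul
        apply Real.continuous_arcsin.comp_continuousOn
        apply ContinuousOn.div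
        · exact ((continuous_const.mul continuous_id').sub continuous_const).continuousOn
        · exact (continuous_const.mul continuous_id').continuousOn
        · intro x hx
          have : 0 < x := lt_of_lt_of_le hB0 hx.1
          positivity
    have hderiv : ∀ x ∈ Ioo B A, HasDerivWithinAt F
        (Real.sqrt ((A - x) * (x - B)) / x) (Ioi x) x := by
      intro x hx
      apply HasDerivAt.hasDerivWithinAt
      have hx0 : 0 < x := lt_of_lt_of_le hB0 hx.1.le
      have hpx : 0 < (A - x) * (x - B) := mul_pos (by linarith [hx.2]) (by linarith [hx.1])
      have hr0 : 0 < Real.sqrt ((A - x) * (x - B)) := Real.sqrt_pos.mpr hpx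
      have hr2 : Real.sqrt ((A - x) * (x - B)) ^ 2 = (A - x) * (x - B) :=
        Real.sq_sqrt hpx.le
      have hq2 : Real.sqrt (A * B) ^ 2 = A * B := Real.sq_sqrt (by positivity)
      -- term 1
      have hp : HasDerivAt (fun s => (A - s) * (s - B)) (A + B - 2 * x) x := by
        have := ((hasDerivAt_id x).const_sub A).mul ((hasDerivAt_id x).sub_const B)
        exact this.congr_deriv (by simp; ring)
      have h1 : HasDerivAt (fun s => Real.sqrt ((A - s) * (s - B)))
          ((A + B - 2 * x) / (2 * Real.sqrt ((A - x) * (x - B)))) x :=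
        hp.sqrt hpx.ne'
      -- term 2
      have hL : HasDerivAt (fun s : ℝ => (2 * s - (A + B)) / (A - B)) (2 / (A - B)) x := by
        have := (((hasDerivAt_id x).const_mul 2).sub_const (A + B)).div_const (A - B)
        exact this.congr_deriv (by simp)
      have hLlt : (2 * x - (A + B)) / (A - B) < 1 := (div_lt_one hABpos).mpr (by linarith [hx.2])
      have hLgt : -1 < (2 * x - (A + B)) / (A - B) := by
        rw [lt_div_iff₀ hABpos]; linarith [hx.1]
      have h2 : HasDerivAt (fun s : ℝ => Real.arcsin ((2 * s - (A + B)) / (A - B)))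
          (1 / Real.sqrt (1 - ((2 * x - (A + B)) / (A - B)) ^ 2) * (2 / (A - B))) x :=
        (Real.hasDerivAt_arcsin hLgt.ne' hLlt.ne).comp x hL (h₂ := Real.arcsin)
      -- term 3
      have hden : (A - B) * x ≠ 0 := by positivity
      have hh : HasDerivAt (fun s : ℝ => ((A + B) * s - 2 * (A * B)) / ((A - B) * s))
          (((A + B) * 1 * ((A - B) * x) - ((A + B) * x - 2 * (A * B)) * ((A - B) * 1))
            / ((A - B) * x) ^ 2) x :=
        ((hasDerivAt_id' x).const_mul (A + B)).sub_const (2 * (A * B)) |>.div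
          ((hasDerivAt_id' x).const_mul (A - B)) hden
      have hid : 1 - (((A + B) * x - 2 * (A * B)) / ((A - B) * x)) ^ 2
          = (2 / ((A - B) * x)) ^ 2 * ((A * B) * ((A - x) * (x - B))) := by
        field_simp
        ring
      have hpos : 0 < 1 - (((A + B) * x - 2 * (A * B)) / ((A - B) * x)) ^ 2 := by
        rw [hid]; positivity
      have hsq : (((A + B) * x - 2 * (A * B)) / ((A - B) * x)) ^ 2 < 1 := by linarith
      have habs := abs_lt.mp ((sq_lt_one_iff_abs_lt_one _).mp hsq)
      have h3 : HasDerivAt (fun s : ℝ =>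
          Real.arcsin (((A + B) * s - 2 * (A * B)) / ((A - B) * s)))
          (1 / Real.sqrt (1 - (((A + B) * x - 2 * (A * B)) / ((A - B) * x)) ^ 2)
            * (((A + B) * 1 * ((A - B) * x) - ((A + B) * x - 2 * (A * B)) * ((A - B) * 1))
              / ((A - B) * x) ^ 2)) x :=
        (Real.hasDerivAt_arcsin habs.1.ne' habs.2.ne).comp x hh (h₂ := Real.arcsin)
      have hsum := (h1.add (h2.const_mul ((A + B) / 2))).sub (h3.const_mul (Real.sqrt (A * B)))
      refine hsum.congr_deriv (Eq.symm ?_)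
      have e1 : Real.sqrt (1 - ((2 * x - (A + B)) / (A - B)) ^ 2)
          = 2 / (A - B) * Real.sqrt ((A - x) * (x - B)) := by
        rw [show 1 - ((2 * x - (A + B)) / (A - B)) ^ 2
            = (2 / (A - B)) ^ 2 * ((A - x) * (x - B)) by field_simp; ring,
          Real.sqrt_mul (sq_nonneg _), Real.sqrt_sq (by positivity)]
      have e2 : Real.sqrt (1 - (((A + B) * x - 2 * (A * B)) / ((A - B) * x)) ^ 2)
          = 2 / ((A - B) * x) * (Real.sqrt (A * B) * Real.sqrt ((A - x) * (x - B))) := by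
        rw [hid, Real.sqrt_mul (sq_nonneg _), Real.sqrt_sq (by positivity),
          Real.sqrt_mul (by positivity)]
      rw [e1, e2]
      exact derivAlg1 A B x _ _ hABpos hx0 hr0 hq0 hr2 hq2
    have hint : IntervalIntegrable (fun s => Real.sqrt ((A - s) * (s - B)) / s) volume B A :=
      sqrtIntAux1 hB hBA.le
    rw [integral_eq_sub_of_hasDeriv_right_of_le hBA.le hcont hderiv hint]
    have hFA : F A = (A + B) / 2 * (π / 2) - Real.sqrt (A * B) * (π / 2) := by
      rw [hF]
      simp only
      rw [show (2 * A - (A + B)) / (A - B) = 1 by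
          rw [show 2 * A - (A + B) = A - B by ring, div_self hABpos.ne'],
        show ((A + B) * A - 2 * (A * B)) / ((A - B) * A) = 1 by
          rw [show (A + B) * A - 2 * (A * B) = (A - B) * A by ring]
          exact div_self (by positivity),
        Real.arcsin_one]
      simp
    have hFB : F B = (A + B) / 2 * (-(π / 2)) - Real.sqrt (A * B) * (-(π / 2)) := by
      rw [hF]
      simp only
      rw [show (2 * B - (A + B)) / (A - B) = -1 by
          rw [show 2 * B - (A + B) = -(A - B) by ring, neg_div, div_self hABpos.ne'],
        show ((A + B) * B - 2 * (A * B)) / ((A - B) * B) = -1 by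
          rw [show (A + B) * B - 2 * (A * B) = -((A - B) * B) by ring, neg_div,
            div_self (by positivity)],
        Real.arcsin_neg_one]
      simp
    rw [hFA, hFB]; ring
  · -- B = 0
    subst hB0
    simp only [sub_zero, add_zero, mul_zero, Real.sqrt_zero]
    set F : ℝ → ℝ := fun s => Real.sqrt ((A - s) * s)
      + A / 2 * Real.arcsin ((2 * s - A) / A) with hF
    have hA0 : 0 < A := hBA
    have hcont : ContinuousOn F (Icc 0 A) := by
      apply ContinuousOn.add
      · exact (Real.continuous_sqrt.comp (by continuity)).continuousOn
      · exact continuousOn_const.mul (Real.continuous_arcsin.comp_continuousOn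
          (((continuous_const.mul continuous_id').sub continuous_const).div_const _).continuousOn)
    have hderiv : ∀ x ∈ Ioo 0 A, HasDerivWithinAt F
        (Real.sqrt ((A - x) * x) / x) (Ioi x) x := by
      intro x hx
      apply HasDerivAt.hasDerivWithinAt
      have hx0 : 0 < x := hx.1
      have hpx : 0 < (A - x) * x := mul_pos (by linarith [hx.2]) hx0
      have hr0 : 0 < Real.sqrt ((A - x) * x) := Real.sqrt_pos.mpr hpx
      have hr2 : Real.sqrt ((A - x) * x) ^ 2 = (A - x) * x := Real.sq_sqrt hpx.le
      have hp : HasDerivAt (fun s => (A - s) * s) (A - 2 * x) x := by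
        have := ((hasDerivAt_id x).const_sub A).mul (hasDerivAt_id x)
        exact this.congr_deriv (by simp; ring)
      have h1 : HasDerivAt (fun s => Real.sqrt ((A - s) * s))
          ((A - 2 * x) / (2 * Real.sqrt ((A - x) * x))) x := hp.sqrt hpx.ne'
      have hL : HasDerivAt (fun s : ℝ => (2 * s - A) / A) (2 / A) x := by
        have := (((hasDerivAt_id x).const_mul 2).sub_const A).div_const A
        exact this.congr_deriv (by simp)
      have hLlt : (2 * x - A) / A < 1 := (div_lt_one hA0).mpr (by linarith [hx.2])
      have hLgt : -1 < (2 * x - A) / A := by rw [lt_div_iff₀ hA0]; linarith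
      have h2 : HasDerivAt (fun s : ℝ => Real.arcsin ((2 * s - A) / A))
          (1 / Real.sqrt (1 - ((2 * x - A) / A) ^ 2) * (2 / A)) x :=
        (Real.hasDerivAt_arcsin hLgt.ne' hLlt.ne).comp x hL (h₂ := Real.arcsin)
      have hsum := h1.add (h2.const_mul (A / 2))
      refine hsum.congr_deriv (Eq.symm ?_)
      have e1 : Real.sqrt (1 - ((2 * x - A) / A) ^ 2)
          = 2 / A * Real.sqrt ((A - x) * x) := by
        rw [show 1 - ((2 * x - A) / A) ^ 2 = (2 / A) ^ 2 * ((A - x) * x) by field_simp; ring,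
          Real.sqrt_mul (sq_nonneg _), Real.sqrt_sq (by positivity)]
      rw [e1]
      exact derivAlg2 A x _ hA0 hx0 hr0 hr2
    have hint : IntervalIntegrable (fun s => Real.sqrt ((A - s) * s) / s) volume 0 A := by
      have := sqrtIntAux1 (A := A) (B := 0) le_rfl hBA.le
      simpa using this
    rw [integral_eq_sub_of_hasDeriv_right_of_le hBA.le hcont hderiv hint]
    have hFA : F A = A / 2 * (π / 2) := by
      rw [hF]
      simp only
      rw [show (2 * A - A) / A = 1 by
        rw [show 2 * A - A = A by ring, div_self hA0.ne'], Real.arcsin_one]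
      simp
    have hF0 : F 0 = A / 2 * (-(π / 2)) := by
      rw [hF]
      simp only
      rw [show (2 * 0 - A) / A = -1 by rw [show 2 * (0:ℝ) - A = -A by ring, neg_div,
          div_self hA0.ne'], Real.arcsin_neg_one]
      simp
    rw [hFA, hF0]; ring

lemma gAeEq {A B : ℝ} : (fun s => Real.sqrt ((A - s) * (s - B)) / (2 * π * s * (1 - s)))
    =ᵐ[volume] (fun s => 1 / (2 * π) * (Real.sqrt ((A - s) * (s - B)) / s
      + Real.sqrt ((A - s) * (s - B)) / (1 - s))) := by
  have h01 : ∀ᵐ (s : ℝ), s ∉ ({0, 1} : Set ℝ) :=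
    (((Set.finite_singleton (1:ℝ)).insert 0).countable).ae_notMem volume
  filter_upwards [h01] with s hs
  have hs0 : s ≠ 0 := fun h => hs (by simp [h])
  have hs1 : (1 : ℝ) - s ≠ 0 := fun h => hs (by simp [show s = 1 by linarith])
  field_simp
  ring

lemma intGInt {A B : ℝ} (hB : 0 ≤ B) (hBA : B ≤ A) (hA1 : A ≤ 1) :
    IntervalIntegrable
      (fun s => Real.sqrt ((A - s) * (s - B)) / (2 * π * s * (1 - s))) volume B A := by
  have hsum := ((sqrtIntAux1 hB hBA).add (sqrtIntAux2 hB hBA hA1)).const_mul (1 / (2 * π))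
  rw [intervalIntegrable_iff] at hsum ⊢
  exact hsum.congr (ae_restrict_of_ae gAeEq.symm)

lemma intG {A B : ℝ} (hB : 0 ≤ B) (hBA : B < A) (hA1 : A ≤ 1) :
    ∫ s in B..A, Real.sqrt ((A - s) * (s - B)) / (2 * π * s * (1 - s))
      = (1 - Real.sqrt (A * B) - Real.sqrt ((1 - A) * (1 - B))) / 2 := by
  have hcongr : ∫ s in B..A, Real.sqrt ((A - s) * (s - B)) / (2 * π * s * (1 - s))
      = ∫ s in B..A, 1 / (2 * π) * (Real.sqrt ((A - s) * (s - B)) / s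
        + Real.sqrt ((A - s) * (s - B)) / (1 - s)) :=
    intervalIntegral.integral_congr_ae (gAeEq.mono fun s h _ => h)
  rw [hcongr, intervalIntegral.integral_const_mul,
    intervalIntegral.integral_add (sqrtIntAux1 hB hBA.le) (sqrtIntAux2 hB hBA.le hA1),
    intJ hB hBA]
  have hJ2 : ∫ s in B..A, Real.sqrt ((A - s) * (s - B)) / (1 - s)
      = π * (((1 - B) + (1 - A)) / 2 - Real.sqrt ((1 - B) * (1 - A))) := by
    have e : ∀ s : ℝ, Real.sqrt ((A - s) * (s - B)) / (1 - s)
        = Real.sqrt ((1 - B - (1 - s)) * (1 - s - (1 - A))) / (1 - s) := fun s => by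
      rw [show (1 - B - (1 - s)) * (1 - s - (1 - A)) = (A - s) * (s - B) by ring]
    simp_rw [e]
    rw [intervalIntegral.integral_comp_sub_left
      (fun u => Real.sqrt ((1 - B - u) * (u - (1 - A))) / u) 1]
    exact intJ (by linarith) (by linarith)
  rw [hJ2, show Real.sqrt ((1 - B) * (1 - A)) = Real.sqrt ((1 - A) * (1 - B)) by rw [mul_comm]]
  field_simp
  ring

lemma main_ab (a b : ℝ) (ha : 0 < a) (hb : 0 < b) (hab1 : a + b ≤ 1) :
    (∫ t in Icc (1 - a - b) (min (1 - a + b) (1 + a - b)) ∪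
        Icc (max (1 - a + b) (1 + a - b)) (1 + a + b),
      Real.sqrt (-((t - (1 - a - b)) * (t - (1 - a + b)) * (t - (1 + a - b)) * (t - (1 + a + b))))
        / (π * t * (2 - t) * |t - 1|))
    = 1 - (a + b) * |a - b| - Real.sqrt ((1 - (a + b) ^ 2) * (1 - (a - b) ^ 2)) := by
  have hc0 : 0 ≤ |a - b| := abs_nonneg _
  have hcab : |a - b| < a + b := abs_sub_lt_iff.mpr ⟨by linarith, by linarith⟩
  have hmin : min (1 - a + b) (1 + a - b) = 1 - |a - b| := by
    rcases le_total a b with h | h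
    · rw [min_eq_right (by linarith), abs_of_nonpos (by linarith)]; ring
    · rw [min_eq_left (by linarith), abs_of_nonneg (by linarith)]; ring
  have hmax : max (1 - a + b) (1 + a - b) = 1 + |a - b| := by
    rcases le_total a b with h | h
    · rw [max_eq_left (by linarith), abs_of_nonpos (by linarith)]; ring
    · rw [max_eq_right (by linarith), abs_of_nonneg (by linarith)]; ring
  rw [hmin, hmax]
  set A : ℝ := (a + b) ^ 2 with hA
  set B : ℝ := (a - b) ^ 2 with hB
  have hB0 : 0 ≤ B := sq_nonneg _
  have hBA : B < A := by rw [hA, hB]; nlinarith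
  have hA1 : A ≤ 1 := by rw [hA]; nlinarith
  have hsqB : Real.sqrt B = |a - b| := Real.sqrt_sq_eq_abs _
  have hsqA : Real.sqrt A = a + b := Real.sqrt_sq (by linarith)
  set g : ℝ → ℝ := fun s => Real.sqrt ((A - s) * (s - B)) / (2 * π * s * (1 - s)) with hg
  set φ : ℝ → ℝ := fun t => (t - 1) ^ 2 with hφ
  have hφd : ∀ t : ℝ, HasDerivAt φ (2 * (t - 1)) t := by
    intro t
    have := ((hasDerivAt_id t).sub_const 1).pow 2
    exact this.congr_deriv (by simp)
  set dens : ℝ → ℝ := fun t =>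
    Real.sqrt (-((t - (1 - a - b)) * (t - (1 - a + b)) * (t - (1 + a - b)) * (t - (1 + a + b))))
      / (π * t * (2 - t) * |t - 1|) with hdens
  have hN : ∀ t : ℝ, -((t - (1 - a - b)) * (t - (1 - a + b)) * (t - (1 + a - b)) * (t - (1 + a + b)))
      = (A - (t - 1) ^ 2) * ((t - 1) ^ 2 - B) := by
    intro t; rw [hA, hB]; ring
  -- the right interval
  have hRimg : φ '' Icc (1 + |a - b|) (1 + a + b) = Icc B A := by
    apply Subset.antisymm
    · rintro s ⟨t, ht, rfl⟩
      constructor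
      · simp only [hφ, hB]; nlinarith [ht.1, ht.2, sq_abs (a - b)]
      · simp only [hφ, hA]; nlinarith [ht.1, ht.2]
    · intro s hs
      have hs0 : 0 ≤ s := le_trans hB0 hs.1
      refine ⟨1 + Real.sqrt s, ⟨?_, ?_⟩, ?_⟩
      · have : |a - b| ≤ Real.sqrt s := by
          rw [← hsqB]; exact Real.sqrt_le_sqrt hs.1
        linarith
      · have : Real.sqrt s ≤ a + b := by
          rw [← hsqA]; exact Real.sqrt_le_sqrt hs.2
        linarith
      · simp only [hφ, add_sub_cancel_left]
        exact Real.sq_sqrt hs0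
  have hRinj : InjOn φ (Icc (1 + |a - b|) (1 + a + b)) := by
    intro x hx y hy hxy
    simp only [hφ] at hxy
    have h1 : |x - 1| = |y - 1| := by
      rw [← Real.sqrt_sq_eq_abs, ← Real.sqrt_sq_eq_abs, hxy]
    rw [abs_of_nonneg (by linarith [hx.1] : (0:ℝ) ≤ x - 1),
      abs_of_nonneg (by linarith [hy.1] : (0:ℝ) ≤ y - 1)] at h1
    linarith
  have hRder : ∀ t ∈ Icc (1 + |a - b|) (1 + a + b),
      HasDerivWithinAt φ (2 * (t - 1)) (Icc (1 + |a - b|) (1 + a + b)) t :=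
    fun t _ => (hφd t).hasDerivWithinAt
  have hReq : EqOn (fun t => |2 * (t - 1)| • g (φ t)) dens (Icc (1 + |a - b|) (1 + a + b)) := by
    intro t ht
    have ht1 : 1 ≤ t := by linarith [ht.1]
    have ht2 : t ≤ 2 := by linarith [ht.2]
    simp only [smul_eq_mul, hdens, hg, hφ]
    rw [hN t, abs_of_nonneg (by linarith : (0:ℝ) ≤ 2 * (t - 1)),
      abs_of_nonneg (by linarith : (0:ℝ) ≤ t - 1)]
    rcases eq_or_lt_of_le ht1 with h1 | h1
    · -- t = 1
      have hab : |a - b| = 0 := by have := ht.1; rw [← h1] at this; linarith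
      have hBz : B = 0 := by rw [hB, ← sq_abs, hab]; ring
      rw [← h1]
      norm_num [hBz]
    · rcases eq_or_lt_of_le ht2 with h2 | h2
      · -- t = 2
        rw [h2]
        norm_num
      · have ht10 : t - 1 ≠ 0 := by intro h; linarith
        have hpos2 : (0:ℝ) < 1 - (t - 1) ^ 2 := by nlinarith
        have hden1 : (2 * π * (t - 1) ^ 2 * (1 - (t - 1) ^ 2)) ≠ 0 :=
          mul_ne_zero (mul_ne_zero (mul_ne_zero two_ne_zero Real.pi_ne_zero)
            (pow_ne_zero 2 ht10)) hpos2.ne'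
        have hden2 : (π * t * (2 - t) * (t - 1)) ≠ 0 :=
          mul_ne_zero (mul_ne_zero (mul_ne_zero Real.pi_ne_zero (by intro h; linarith : t ≠ 0)) (by intro h; linarith)) ht10
        rw [mul_div_assoc']
        rw [div_eq_div_iff hden1 hden2]
        ring
  -- the left interval
  have hLimg : φ '' Icc (1 - a - b) (1 - |a - b|) = Icc B A := by
    apply Subset.antisymm
    · rintro s ⟨t, ht, rfl⟩
      constructor
      · simp only [hφ, hB]; nlinarith [ht.1, ht.2, sq_abs (a - b)]
      · simp only [hφ, hA]; nlinarith [ht.1, ht.2]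
    · intro s hs
      have hs0 : 0 ≤ s := le_trans hB0 hs.1
      refine ⟨1 - Real.sqrt s, ⟨?_, ?_⟩, ?_⟩
      · have : Real.sqrt s ≤ a + b := by
          rw [← hsqA]; exact Real.sqrt_le_sqrt hs.2
        linarith
      · have : |a - b| ≤ Real.sqrt s := by
          rw [← hsqB]; exact Real.sqrt_le_sqrt hs.1
        linarith
      · simp only [hφ]
        rw [show 1 - Real.sqrt s - 1 = -Real.sqrt s by ring, neg_pow, neg_one_sq, one_mul]
        exact Real.sq_sqrt hs0
  have hLinj : InjOn φ (Icc (1 - a - b) (1 - |a - b|)) := by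
    intro x hx y hy hxy
    simp only [hφ] at hxy
    have h1 : |x - 1| = |y - 1| := by
      rw [← Real.sqrt_sq_eq_abs, ← Real.sqrt_sq_eq_abs, hxy]
    rw [abs_of_nonpos (by linarith [hx.2] : x - 1 ≤ (0:ℝ)),
      abs_of_nonpos (by linarith [hy.2] : y - 1 ≤ (0:ℝ))] at h1
    linarith
  have hLder : ∀ t ∈ Icc (1 - a - b) (1 - |a - b|),
      HasDerivWithinAt φ (2 * (t - 1)) (Icc (1 - a - b) (1 - |a - b|)) t :=
    fun t _ => (hφd t).hasDerivWithinAt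
  have hLeq : EqOn (fun t => |2 * (t - 1)| • g (φ t)) dens (Icc (1 - a - b) (1 - |a - b|)) := by
    intro t ht
    have ht1 : t ≤ 1 := by linarith [ht.2]
    have ht2 : 0 ≤ t := by linarith [ht.1]
    simp only [smul_eq_mul, hdens, hg, hφ]
    rw [hN t, abs_of_nonpos (by linarith : 2 * (t - 1) ≤ (0:ℝ)),
      abs_of_nonpos (by linarith : t - 1 ≤ (0:ℝ))]
    rcases eq_or_lt_of_le ht1 with h1 | h1
    · -- t = 1
      have hab : |a - b| = 0 := by have := ht.2; rw [h1] at this; linarith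
      have hBz : B = 0 := by rw [hB, ← sq_abs, hab]; ring
      rw [h1]
      norm_num [hBz]
    · rcases eq_or_lt_of_le ht2 with h2 | h2
      · -- t = 0
        rw [← h2]
        norm_num
      · have ht10 : t - 1 ≠ 0 := by intro h; linarith
        have hpos2 : (0:ℝ) < 1 - (t - 1) ^ 2 := by nlinarith
        have hden1 : (2 * π * (t - 1) ^ 2 * (1 - (t - 1) ^ 2)) ≠ 0 :=
          mul_ne_zero (mul_ne_zero (mul_ne_zero two_ne_zero Real.pi_ne_zero)
            (pow_ne_zero 2 ht10)) hpos2.ne'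
        have hden2 : (π * t * (2 - t) * -(t - 1)) ≠ 0 :=
          mul_ne_zero (mul_ne_zero (mul_ne_zero Real.pi_ne_zero (by intro h; linarith))
            (by intro h; linarith)) (by intro h; apply ht10; linarith)
        rw [mul_div_assoc']
        rw [div_eq_div_iff hden1 hden2]
        ring
  -- integrability
  have hgInt : IntegrableOn g (Icc B A) :=
    (intervalIntegrable_iff_integrableOn_Icc_of_le hBA.le).mp (intGInt hB0 hBA.le hA1)
  have hint2 : IntegrableOn dens (Icc (1 + |a - b|) (1 + a + b)) := by
    have := (integrableOn_image_iff_integrableOn_abs_deriv_smul measurableSet_Icc hRder hRinj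
      g).mp (hRimg ▸ hgInt)
    exact this.congr_fun hReq measurableSet_Icc
  have hint1 : IntegrableOn dens (Icc (1 - a - b) (1 - |a - b|)) := by
    have := (integrableOn_image_iff_integrableOn_abs_deriv_smul measurableSet_Icc hLder hLinj
      g).mp (hLimg ▸ hgInt)
    exact this.congr_fun hLeq measurableSet_Icc
  -- disjointness
  have hdisj : AEDisjoint volume (Icc (1 - a - b) (1 - |a - b|)) (Icc (1 + |a - b|) (1 + a + b)) := by
    apply measure_mono_null
      (fun x hx => (mem_Icc.mpr ⟨hx.2.1, hx.1.2⟩ : x ∈ Icc (1 + |a - b|) (1 - |a - b|)))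
    rw [Real.volume_Icc]
    exact ENNReal.ofReal_eq_zero.mpr (by linarith)
  rw [integral_union_ae hdisj measurableSet_Icc.nullMeasurableSet hint1 hint2]
  have hIR : ∫ t in Icc (1 + |a - b|) (1 + a + b), dens t = ∫ s in Icc B A, g s := by
    rw [← hRimg, integral_image_eq_integral_abs_deriv_smul measurableSet_Icc hRder hRinj g]
    exact (setIntegral_congr_fun measurableSet_Icc hReq).symm
  have hIL : ∫ t in Icc (1 - a - b) (1 - |a - b|), dens t = ∫ s in Icc B A, g s := by
    rw [← hLimg, integral_image_eq_integral_abs_deriv_smul measurableSet_Icc hLder hLinj g]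
    exact (setIntegral_congr_fun measurableSet_Icc hLeq).symm
  rw [hIR, hIL]
  have hval : ∫ s in Icc B A, g s
      = (1 - Real.sqrt (A * B) - Real.sqrt ((1 - A) * (1 - B))) / 2 := by
    rw [MeasureTheory.integral_Icc_eq_integral_Ioc, ← intervalIntegral.integral_of_le hBA.le]
    exact intG hB0 hBA hA1
  rw [hval]
  have hAB : Real.sqrt (A * B) = (a + b) * |a - b| := by
    rw [Real.sqrt_mul (by positivity), hsqA, hsqB]
  rw [hAB]
  ring

/-- the total mass of the absolutely continuous part of `B(α) ⊞ B(β)`: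
the integral of `g(t) = √(-(t-γ₁)(t-γ₂)(t-γ₃)(t-γ₄)) / (π t (2-t)|t-1|)` over
`[γ₁, min(γ₂,γ₃)] ∪ [max(γ₂,γ₃), γ₄]` equals `2·min(α, β, 1-α, 1-β)`. -/
theorem total_mass_bernoulli_boxplus_density
    (α β : ℝ) (hα : α ∈ Set.Icc (0:ℝ) 1) (hβ : β ∈ Set.Icc (0:ℝ) 1) :
    (∫ t in Set.Icc (γ₁ α β) (min (γ₂ α β) (γ₃ α β)) ∪
        Set.Icc (max (γ₂ α β) (γ₃ α β)) (γ₄ α β),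
      bernoulliBoxplusDensity α β t) =
      2 * min (min α β) (min (1 - α) (1 - β)) := by
  obtain ⟨hα0, hα1⟩ := hα
  obtain ⟨hβ0, hβ1⟩ := hβ
  have ha0 : 0 ≤ Real.sqrt (β * (1 - α)) := Real.sqrt_nonneg _
  have hb0 : 0 ≤ Real.sqrt (α * (1 - β)) := Real.sqrt_nonneg _
  have ha2 : Real.sqrt (β * (1 - α)) ^ 2 = β * (1 - α) :=
    Real.sq_sqrt (mul_nonneg hβ0 (by linarith))
  have hb2 : Real.sqrt (α * (1 - β)) ^ 2 = α * (1 - β) :=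
    Real.sq_sqrt (mul_nonneg hα0 (by linarith))
  have hminz : min (min α β) (min (1 - α) (1 - β)) = 0 →
      2 * min (min α β) (min (1 - α) (1 - β)) = 0 := fun h => by rw [h]; ring
  by_cases hAz : Real.sqrt (β * (1 - α)) = 0
  · -- degenerate: a = 0
    have hmin : min (γ₂ α β) (γ₃ α β) = γ₁ α β := by
      simp only [γ₁, γ₂, γ₃, hAz]
      rw [min_eq_right (by linarith)]
      ring
    have hmax : max (γ₂ α β) (γ₃ α β) = γ₄ α β := by
      simp only [γ₂, γ₃, γ₄, hAz]
      rw [max_eq_left (by linarith)]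
      ring
    rw [hmin, hmax]
    have hz : volume (Icc (γ₁ α β) (γ₁ α β) ∪ Icc (γ₄ α β) (γ₄ α β)) = 0 := by
      apply measure_union_null <;> (rw [Real.volume_Icc]; simp)
    rw [Measure.restrict_eq_zero.mpr hz, integral_zero_measure]
    have h0 : β * (1 - α) = 0 :=
      le_antisymm (Real.sqrt_eq_zero'.mp hAz) (mul_nonneg hβ0 (by linarith))
    rcases mul_eq_zero.mp h0 with h | h
    · subst h
      have hm : min (min α 0) (min (1 - α) (1 - 0)) = 0 :=
        le_antisymm (le_trans (min_le_left _ _) (min_le_right α 0))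
          (le_min (le_min hα0 le_rfl) (le_min (by linarith) (by linarith)))
      rw [hm]; ring
    · have hα' : α = 1 := by linarith
      subst hα'
      have hm : min (min 1 β) (min (1 - 1) (1 - β)) = 0 :=
        le_antisymm (le_trans (min_le_right _ _) (by
          rw [show (1:ℝ) - 1 = 0 from by ring]; exact min_le_left _ _))
          (le_min (le_min (by linarith) hβ0) (le_min (by linarith) (by linarith)))
      rw [hm]; ring
  · by_cases hBz : Real.sqrt (α * (1 - β)) = 0
    · -- degenerate: b = 0
      have hmin : min (γ₂ α β) (γ₃ α β) = γ₁ α β := by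
        simp only [γ₁, γ₂, γ₃, hBz]
        rw [min_eq_left (by linarith [lt_of_le_of_ne ha0 (Ne.symm hAz)])]
        ring
      have hmax : max (γ₂ α β) (γ₃ α β) = γ₄ α β := by
        simp only [γ₂, γ₃, γ₄, hBz]
        rw [max_eq_right (by linarith [lt_of_le_of_ne ha0 (Ne.symm hAz)])]
        ring
      rw [hmin, hmax]
      have hz : volume (Icc (γ₁ α β) (γ₁ α β) ∪ Icc (γ₄ α β) (γ₄ α β)) = 0 := by
        apply measure_union_null <;> (rw [Real.volume_Icc]; simp)
      rw [Measure.restrict_eq_zero.mpr hz, integral_zero_measure]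
      have h0 : α * (1 - β) = 0 :=
        le_antisymm (Real.sqrt_eq_zero'.mp hBz) (mul_nonneg hα0 (by linarith))
      rcases mul_eq_zero.mp h0 with h | h
      · subst h
        have hm : min (min 0 β) (min (1 - 0) (1 - β)) = 0 :=
          le_antisymm (le_trans (min_le_left _ _) (min_le_left 0 β))
            (le_min (le_min le_rfl hβ0) (le_min (by linarith) (by linarith)))
        rw [hm]; ring
      · have hβ' : β = 1 := by linarith
        subst hβ'
        have hm : min (min α 1) (min (1 - α) (1 - 1)) = 0 :=
          le_antisymm (le_trans (min_le_right _ _) (by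
            rw [show (1:ℝ) - 1 = 0 from by ring]; exact min_le_right _ _))
            (le_min (le_min hα0 (by linarith)) (le_min (by linarith) (by linarith)))
        rw [hm]; ring
    · -- main case
      have ha : 0 < Real.sqrt (β * (1 - α)) := lt_of_le_of_ne ha0 (Ne.symm hAz)
      have hb : 0 < Real.sqrt (α * (1 - β)) := lt_of_le_of_ne hb0 (Ne.symm hBz)
      have hale : Real.sqrt (β * (1 - α)) ≤ (β + (1 - α)) / 2 := by
        rw [show (β + (1 - α)) / 2 = Real.sqrt (((β + (1 - α)) / 2) ^ 2) from
          (Real.sqrt_sq (by linarith)).symm]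
        exact Real.sqrt_le_sqrt (by nlinarith [sq_nonneg (β - (1 - α))])
      have hble : Real.sqrt (α * (1 - β)) ≤ (α + (1 - β)) / 2 := by
        rw [show (α + (1 - β)) / 2 = Real.sqrt (((α + (1 - β)) / 2) ^ 2) from
          (Real.sqrt_sq (by linarith)).symm]
        exact Real.sqrt_le_sqrt (by nlinarith [sq_nonneg (α - (1 - β))])
      have hab1 : Real.sqrt (β * (1 - α)) + Real.sqrt (α * (1 - β)) ≤ 1 := by linarith
      simp only [γ₁, γ₂, γ₃, γ₄, bernoulliBoxplusDensity]
      rw [main_ab _ _ ha hb hab1]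
      set a := Real.sqrt (β * (1 - α))
      set b := Real.sqrt (α * (1 - β))
      have e1 : (a + b) * |a - b| = |β - α| := by
        rw [← abs_of_nonneg (by positivity : (0:ℝ) ≤ a + b), ← abs_mul]
        congr 1
        linear_combination ha2 - hb2
      have e2 : Real.sqrt ((1 - (a + b) ^ 2) * (1 - (a - b) ^ 2)) = |1 - α - β| := by
        rw [show (1 - (a + b) ^ 2) * (1 - (a - b) ^ 2)
            = (1 - a ^ 2 - b ^ 2) ^ 2 - 4 * (a ^ 2 * b ^ 2) by ring, ha2, hb2,
          show (1 - β * (1 - α) - α * (1 - β)) ^ 2 - 4 * (β * (1 - α) * (α * (1 - β)))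
            = (1 - α - β) ^ 2 by ring, Real.sqrt_sq_eq_abs]
      rw [e1, e2]
      rcases le_total α β with h | h <;> rcases le_total (α + β) 1 with h' | h'
      · rw [abs_of_nonneg (by linarith), abs_of_nonneg (by linarith), min_eq_left h,
          min_eq_right (by linarith : 1 - β ≤ 1 - α), min_eq_left (by linarith)]
        ring
      · rw [abs_of_nonneg (by linarith), abs_of_nonpos (by linarith), min_eq_left h,
          min_eq_right (by linarith : 1 - β ≤ 1 - α), min_eq_right (by linarith)]
        ring
      · rw [abs_of_nonpos (by linarith), abs_of_nonneg (by linarith), min_eq_right h,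
          min_eq_left (by linarith : 1 - α ≤ 1 - β), min_eq_left (by linarith)]
        ring
      · rw [abs_of_nonpos (by linarith), abs_of_nonpos (by linarith), min_eq_right h,
          min_eq_left (by linarith : 1 - α ≤ 1 - β), min_eq_right (by linarith)]
        ring
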